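/- Let H be a complex Hilbert space and let S, T be normal bounded linear operators on H with Cartesian decompositions S = A + iC and T = B + iD such that A and B are positive. Then ‖ST − TS‖ ≤ (1/2)·√(‖A‖² + 4‖C‖²)·√(‖B‖² + 4‖D‖²). -/
import Mathlib
open Pointwise

-- Aux 1: for a positive operator A, ‖A - (‖A‖/2) • 1‖ ≤ ‖A‖/2
lemma aux_shift_norm {H : Type*} [NormedAddCommGroup H] [InnerProductSpace ℂ H] [CompleteSpace H]
    (A : H →L[ℂ] H) (hA : A.IsPositive) :
    ‖A - algebraMap ℝ (H →L[ℂ] H) (‖A‖ / 2)‖ ≤ ‖A‖ / 2 := by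
  set r : ℝ := ‖A‖ / 2 with hr
  have hr0 : 0 ≤ r := by positivity
  set X : H →L[ℂ] H := A - algebraMap ℝ (H →L[ℂ] H) r with hX
  have hXsa : IsSelfAdjoint X := by
    refine IsSelfAdjoint.sub hA.isSelfAdjoint ?_
    rw [Algebra.algebraMap_eq_smul_one]
    exact IsSelfAdjoint.smul (star_trivial r) (IsSelfAdjoint.one (H →L[ℂ] H))
  have hAnn : (0 : H →L[ℂ] H) ≤ A := (ContinuousLinearMap.nonneg_iff_isPositive A).mpr hA
  rcases subsingleton_or_nontrivial (H →L[ℂ] H) with h | h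
  · simp [Subsingleton.elim X 0, hr0]
  · have key : ∀ μ ∈ spectrum ℝ X, |μ| ≤ r := by
      intro μ hμ
      have : μ ∈ spectrum ℝ A - ({r} : Set ℝ) := by
        rwa [spectrum.sub_singleton_eq]
      obtain ⟨s, hs, t, ht, hst⟩ := this
      rcases Set.mem_singleton_iff.mp ht
      have h1 : 0 ≤ s := spectrum_nonneg_of_nonneg hAnn hs
      have h2 : s ≤ ‖A‖ := (Real.le_norm_self s).trans (spectrum.norm_le_norm_of_mem hs)
      have hst' : s - r = μ := hst
      rw [← hst', abs_le]
      constructor <;> linarith [hr]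
    rcases CStarAlgebra.norm_or_neg_norm_mem_spectrum hXsa with h' | h'
    · simpa [abs_of_nonneg (norm_nonneg X)] using key _ h'
    · have := key _ h'
      rwa [abs_neg, abs_of_nonneg (norm_nonneg X)] at this

-- Aux 2: for S = A + iC with A, C self-adjoint and S "normal", ‖S‖² ≤ ‖A‖² + ‖C‖²
lemma aux_normal_norm_sq {H : Type*} [NormedAddCommGroup H] [InnerProductSpace ℂ H]
    [CompleteSpace H] (S A C : H →L[ℂ] H) (hn : star S * S = S * star S)
    (hAsa : IsSelfAdjoint A) (hC : IsSelfAdjoint C) (hdec : S = A + Complex.I • C) :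
    ‖S‖ ^ 2 ≤ ‖A‖ ^ 2 + ‖C‖ ^ 2 := by
  have hstar : star S = A - Complex.I • C := by
    rw [hdec, star_add, star_smul, hAsa.star_eq, hC.star_eq]
    simp [Complex.conj_I, neg_smul, sub_eq_add_neg]
  have hsum : star S * S + S * star S = (A * A + C * C) + (A * A + C * C) := by
    rw [hstar, hdec]
    simp only [sub_mul, mul_sub, add_mul, mul_add, smul_mul_assoc, mul_smul_comm, smul_smul,
      Complex.I_mul_I, neg_smul, one_smul, smul_sub, smul_add]
    abel
  have hkey : star S * S = A * A + C * C := by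
    have h2 : (2 : ℝ) • (star S * S) = (2 : ℝ) • (A * A + C * C) := by
      rw [two_smul, two_smul]
      nth_rewrite 2 [hn]
      exact hsum
    exact smul_right_injective (H →L[ℂ] H) (two_ne_zero) h2
  have h3 : ‖S‖ ^ 2 = ‖star S * S‖ := by
    rw [CStarRing.norm_star_mul_self, sq]
  rw [h3, hkey]
  calc ‖A * A + C * C‖ ≤ ‖A * A‖ + ‖C * C‖ := norm_add_le _ _
    _ ≤ ‖A‖ * ‖A‖ + ‖C‖ * ‖C‖ := add_le_add (norm_mul_le _ _) (norm_mul_le _ _)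
    _ = ‖A‖ ^ 2 + ‖C‖ ^ 2 := by ring

/-- For normal `S = A + iC`, `T = B + iD` with `A, B` positive,
`‖ST − TS‖ ≤ (1/2)√(‖A‖² + 4‖C‖²)·√(‖B‖² + 4‖D‖²)`. -/
theorem commutator_norm_bound_of_positive_real_parts
    {H : Type*} [NormedAddCommGroup H] [InnerProductSpace ℂ H] [CompleteSpace H]
    (S T A B C D : H →L[ℂ] H)
    (hS : IsStarNormal S) (hT : IsStarNormal T)
    (hC : IsSelfAdjoint C) (hD : IsSelfAdjoint D)
    (hSdec : S = A + Complex.I • C) (hTdec : T = B + Complex.I • D)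
    (hA : A.IsPositive) (hB : B.IsPositive) :
    ‖S * T - T * S‖ ≤
      (1 / 2) * Real.sqrt (‖A‖ ^ 2 + 4 * ‖C‖ ^ 2) * Real.sqrt (‖B‖ ^ 2 + 4 * ‖D‖ ^ 2) := by
  set c : H →L[ℂ] H := algebraMap ℝ (H →L[ℂ] H) (‖A‖ / 2) with hc
  set d : H →L[ℂ] H := algebraMap ℝ (H →L[ℂ] H) (‖B‖ / 2) with hd
  set S' : H →L[ℂ] H := S - c with hS'
  set T' : H →L[ℂ] H := T - d with hT'
  have hcsa : IsSelfAdjoint c := by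
    rw [hc, Algebra.algebraMap_eq_smul_one]
    exact IsSelfAdjoint.smul (star_trivial _) (IsSelfAdjoint.one (H →L[ℂ] H))
  have hdsa : IsSelfAdjoint d := by
    rw [hd, Algebra.algebraMap_eq_smul_one]
    exact IsSelfAdjoint.smul (star_trivial _) (IsSelfAdjoint.one (H →L[ℂ] H))
  -- normality of the shifted operators
  have hnS' : star S' * S' = S' * star S' := by
    rw [hS', star_sub, hcsa.star_eq]
    simp only [sub_mul, mul_sub]
    rw [star_comm_self' S, Algebra.commutes (‖A‖ / 2) S, Algebra.commutes (‖A‖ / 2) (star S)]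
    abel
  have hnT' : star T' * T' = T' * star T' := by
    rw [hT', star_sub, hdsa.star_eq]
    simp only [sub_mul, mul_sub]
    rw [star_comm_self' T, Algebra.commutes (‖B‖ / 2) T, Algebra.commutes (‖B‖ / 2) (star T)]
    abel
  -- decompositions of the shifted operators
  have hS'dec : S' = (A - c) + Complex.I • C := by rw [hS', hSdec]; abel
  have hT'dec : T' = (B - d) + Complex.I • D := by rw [hT', hTdec]; abel
  -- norm bounds
  have hAc : ‖A - c‖ ≤ ‖A‖ / 2 := aux_shift_norm A hA
  have hBd : ‖B - d‖ ≤ ‖B‖ / 2 := aux_shift_norm B hB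
  have hS'sq : ‖S'‖ ^ 2 ≤ (‖A‖ / 2) ^ 2 + ‖C‖ ^ 2 := by
    refine (aux_normal_norm_sq S' (A - c) C hnS' (hA.isSelfAdjoint.sub hcsa) hC hS'dec).trans ?_
    have := pow_le_pow_left₀ (norm_nonneg (A - c)) hAc 2
    linarith
  have hT'sq : ‖T'‖ ^ 2 ≤ (‖B‖ / 2) ^ 2 + ‖D‖ ^ 2 := by
    refine (aux_normal_norm_sq T' (B - d) D hnT' (hB.isSelfAdjoint.sub hdsa) hD hT'dec).trans ?_
    have := pow_le_pow_left₀ (norm_nonneg (B - d)) hBd 2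
    linarith
  -- commutator identity
  have hcomm : S * T - T * S = S' * T' - T' * S' := by
    rw [hS', hT']
    simp only [sub_mul, mul_sub]
    rw [Algebra.commutes (‖A‖ / 2) T, Algebra.commutes (‖B‖ / 2) S, hd,
      Algebra.commutes (‖A‖ / 2) (algebraMap ℝ (H →L[ℂ] H) (‖B‖ / 2))]
    abel
  -- square roots
  set X : ℝ := Real.sqrt (‖A‖ ^ 2 + 4 * ‖C‖ ^ 2) with hX
  set Y : ℝ := Real.sqrt (‖B‖ ^ 2 + 4 * ‖D‖ ^ 2) with hY
  have hXnn : 0 ≤ X := Real.sqrt_nonneg _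
  have hYnn : 0 ≤ Y := Real.sqrt_nonneg _
  have hS'le : ‖S'‖ ≤ X / 2 := by
    have h1 : (‖A‖ / 2) ^ 2 + ‖C‖ ^ 2 = (‖A‖ ^ 2 + 4 * ‖C‖ ^ 2) / 4 := by ring
    have h2 : Real.sqrt ((‖A‖ ^ 2 + 4 * ‖C‖ ^ 2) / 4) = X / 2 := by
      rw [hX, Real.sqrt_div (by positivity), show Real.sqrt 4 = 2 by
        rw [show (4 : ℝ) = 2 ^ 2 by norm_num, Real.sqrt_sq (by norm_num)]]
    rw [← h2]
    exact (Real.le_sqrt (norm_nonneg _) (by positivity)).mpr (h1 ▸ hS'sq)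
  have hT'le : ‖T'‖ ≤ Y / 2 := by
    have h1 : (‖B‖ / 2) ^ 2 + ‖D‖ ^ 2 = (‖B‖ ^ 2 + 4 * ‖D‖ ^ 2) / 4 := by ring
    have h2 : Real.sqrt ((‖B‖ ^ 2 + 4 * ‖D‖ ^ 2) / 4) = Y / 2 := by
      rw [hY, Real.sqrt_div (by positivity), show Real.sqrt 4 = 2 by
        rw [show (4 : ℝ) = 2 ^ 2 by norm_num, Real.sqrt_sq (by norm_num)]]
    rw [← h2]
    exact (Real.le_sqrt (norm_nonneg _) (by positivity)).mpr (h1 ▸ hT'sq)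
  calc ‖S * T - T * S‖ = ‖S' * T' - T' * S'‖ := by rw [hcomm]
    _ ≤ ‖S' * T'‖ + ‖T' * S'‖ := norm_sub_le _ _
    _ ≤ ‖S'‖ * ‖T'‖ + ‖T'‖ * ‖S'‖ := add_le_add (norm_mul_le _ _) (norm_mul_le _ _)
    _ ≤ (X / 2) * (Y / 2) + (Y / 2) * (X / 2) := by
        gcongr
    _ = (1 / 2) * X * Y := by ring
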